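/- Let C : Fin d → Fin d → Fin d → ℝ be antisymmetric in its two upper indices. Let g : (Fin d → ℝ) → ℝ be continuously differentiable and f : (Fin d → ℝ) → ℝ be twice continuously differentiable. Then for all x: Σ_{λ,μ,ν} x_λ·C^{μν}_λ·∂_μ g(x)·∂_ν f(x) = −g(x)·Σ_{ν,σ} C^{νσ}_ν·∂_σ f(x) + Σ_ν ∂_ν( y ↦ Σ_{ξ,σ} y_ξ·C^{νσ}_ξ·g(y)·∂_σ f(y) )(x). -/

import Mathlib

noncomputable def pd {d : ℕ} (μ : Fin d) (g : (Fin d → ℝ) → ℝ) (x : Fin d → ℝ) : ℝ :=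
  fderiv ℝ g x (Pi.single μ 1)

section helpers
variable {d : ℕ}

lemma pd_sum {ι : Type*} (s : Finset ι) (F : ι → (Fin d → ℝ) → ℝ) (x : Fin d → ℝ) (ν : Fin d)
    (h : ∀ i ∈ s, DifferentiableAt ℝ (F i) x) :
    pd ν (fun y => ∑ i ∈ s, F i y) x = ∑ i ∈ s, pd ν (F i) x := by
  unfold pd
  rw [fderiv_fun_sum h]
  simp

lemma pd_mul {a b : (Fin d → ℝ) → ℝ} {x : Fin d → ℝ} (ν : Fin d)
    (ha : DifferentiableAt ℝ a x) (hb : DifferentiableAt ℝ b x) :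
    pd ν (fun y => a y * b y) x = pd ν a x * b x + a x * pd ν b x := by
  unfold pd
  rw [fderiv_fun_mul ha hb]
  simp only [ContinuousLinearMap.add_apply, ContinuousLinearMap.smul_apply, smul_eq_mul]
  ring

lemma pd_const_mul {a : (Fin d → ℝ) → ℝ} {x : Fin d → ℝ} (c : ℝ) (ν : Fin d)
    (ha : DifferentiableAt ℝ a x) :
    pd ν (fun y => c * a y) x = c * pd ν a x := by
  unfold pd
  rw [fderiv_const_mul ha]
  simp

lemma pd_coord (ξ ν : Fin d) (x : Fin d → ℝ) :
    pd ν (fun y => y ξ) x = if ξ = ν then 1 else 0 := by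
  unfold pd
  have h : (fun y : Fin d → ℝ => y ξ)
      = (ContinuousLinearMap.proj (R := ℝ) (φ := fun _ : Fin d => ℝ) ξ) := rfl
  rw [h, ContinuousLinearMap.fderiv]
  simp [Pi.single_apply]

lemma differentiable_pd {f : (Fin d → ℝ) → ℝ} (hf : ContDiff ℝ 2 f) (σ : Fin d) :
    Differentiable ℝ (pd σ f) := by
  have h1 : ContDiff ℝ 1 (fderiv ℝ f) := hf.fderiv_right le_rfl
  exact (ContinuousLinearMap.apply ℝ ℝ (Pi.single σ 1)).differentiable.comp
    (h1.differentiable one_ne_zero)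

lemma pd_pd_symm {f : (Fin d → ℝ) → ℝ} (hf : ContDiff ℝ 2 f) (ν σ : Fin d) (x : Fin d → ℝ) :
    pd ν (pd σ f) x = pd σ (pd ν f) x := by
  have h1 : ContDiff ℝ 1 (fderiv ℝ f) := hf.fderiv_right le_rfl
  have key : ∀ a b : Fin d,
      pd a (pd b f) x = fderiv ℝ (fderiv ℝ f) x (Pi.single a 1) (Pi.single b 1) := by
    intro a b
    have hcomp : pd b f = (ContinuousLinearMap.apply ℝ ℝ (Pi.single b 1)) ∘ (fderiv ℝ f) := rfl
    show fderiv ℝ (pd b f) x (Pi.single a 1) = _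
    rw [hcomp, fderiv_comp x (ContinuousLinearMap.apply ℝ ℝ (Pi.single b 1)).differentiableAt
      (h1.differentiable one_ne_zero x), ContinuousLinearMap.fderiv]
    simp
  rw [key, key]
  have hd : ∀ y, HasFDerivAt f (fderiv ℝ f y) y :=
    fun y => (hf.differentiable (by norm_num) y).hasFDerivAt
  have h2 : HasFDerivAt (fderiv ℝ f) (fderiv ℝ (fderiv ℝ f) x) x :=
    (h1.differentiable one_ne_zero x).hasFDerivAt
  exact second_derivative_symmetric hd h2 _ _

end helpers

theorem poisson_bracket_as_divergence {d : ℕ} (C : Fin d → Fin d → Fin d → ℝ)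
    (hC : ∀ μ ν lam, C μ ν lam = - C ν μ lam)
    (g f : (Fin d → ℝ) → ℝ)
    (hg : ContDiff ℝ 1 g) (hf : ContDiff ℝ 2 f) :
    ∀ x, ∑ lam, ∑ μ, ∑ ν, x lam * C μ ν lam * pd μ g x * pd ν f x
      = - g x * (∑ ν, ∑ σ, C ν σ ν * pd σ f x)
        + ∑ ν, pd ν (fun y => ∑ ξ, ∑ σ, y ξ * C ν σ ξ * g y * pd σ f y) x := by
  intro x
  have hgd : Differentiable ℝ g := hg.differentiable one_ne_zero
  have hcoord : ∀ ξ : Fin d, Differentiable ℝ (fun y : Fin d → ℝ => y ξ) :=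
    fun ξ => (ContinuousLinearMap.proj (R := ℝ) (φ := fun _ : Fin d => ℝ) ξ).differentiable
  have hpdf : ∀ σ : Fin d, Differentiable ℝ (pd σ f) := differentiable_pd hf
  -- differentiability of the inner products
  have hprod : ∀ ν σ ξ : Fin d, DifferentiableAt ℝ
      (fun y : Fin d → ℝ => y ξ * g y * pd σ f y) x :=
    fun ν σ ξ => (((hcoord ξ) x).mul (hgd x)).mul ((hpdf σ) x)
  -- compute the divergence term, index by index
  have key : ∀ ν : Fin d,
      pd ν (fun y => ∑ ξ, ∑ σ, y ξ * C ν σ ξ * g y * pd σ f y) x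
      = ∑ ξ, ∑ σ, C ν σ ξ *
          (((if ξ = ν then 1 else 0) * g x + x ξ * pd ν g x) * pd σ f x
            + x ξ * g x * pd ν (pd σ f) x) := by
    intro ν
    have hre : (fun y => ∑ ξ, ∑ σ, y ξ * C ν σ ξ * g y * pd σ f y)
        = fun y => ∑ ξ, ∑ σ, C ν σ ξ * (y ξ * g y * pd σ f y) := by
      funext y
      exact Finset.sum_congr rfl fun ξ _ => Finset.sum_congr rfl fun σ _ => by ring
    rw [hre]
    rw [pd_sum _ _ _ _ (fun ξ _ => by
      exact DifferentiableAt.fun_sum fun σ _ => ((hprod ν σ ξ).const_mul _))]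
    refine Finset.sum_congr rfl fun ξ _ => ?_
    rw [pd_sum _ _ _ _ (fun σ _ => (hprod ν σ ξ).const_mul _)]
    refine Finset.sum_congr rfl fun σ _ => ?_
    rw [pd_const_mul _ _ (hprod ν σ ξ)]
    congr 1
    rw [pd_mul ν (((hcoord ξ) x).fun_mul (hgd x)) ((hpdf σ) x),
        pd_mul ν ((hcoord ξ) x) (hgd x), pd_coord]
  rw [Finset.sum_congr rfl (fun ν _ => key ν)]
  -- now pure algebra on finite sums
  -- split three pieces
  have expand : ∀ ν : Fin d, ∑ ξ, ∑ σ, C ν σ ξ *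
          (((if ξ = ν then 1 else 0) * g x + x ξ * pd ν g x) * pd σ f x
            + x ξ * g x * pd ν (pd σ f) x)
      = (∑ σ, C ν σ ν * g x * pd σ f x)
        + (∑ ξ, ∑ σ, x ξ * C ν σ ξ * pd ν g x * pd σ f x)
        + (∑ ξ, ∑ σ, x ξ * C ν σ ξ * g x * pd ν (pd σ f) x) := by
    intro ν
    have : ∀ ξ : Fin d, ∑ σ, C ν σ ξ *
          (((if ξ = ν then 1 else 0) * g x + x ξ * pd ν g x) * pd σ f x
            + x ξ * g x * pd ν (pd σ f) x)
        = ((if ξ = ν then (∑ σ, C ν σ ν * g x * pd σ f x) else 0)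
          + (∑ σ, x ξ * C ν σ ξ * pd ν g x * pd σ f x)
          + (∑ σ, x ξ * C ν σ ξ * g x * pd ν (pd σ f) x)) := by
      intro ξ
      by_cases h : ξ = ν
      · subst h
        simp only [eq_self_iff_true, if_true]
        rw [← Finset.sum_add_distrib, ← Finset.sum_add_distrib]
        exact Finset.sum_congr rfl fun σ _ => by ring
      · simp only [if_neg h]
        rw [zero_add, ← Finset.sum_add_distrib]
        exact Finset.sum_congr rfl fun σ _ => by ring
    rw [Finset.sum_congr rfl fun ξ _ => this ξ]
    rw [Finset.sum_add_distrib, Finset.sum_add_distrib, Finset.sum_ite_eq' Finset.univ ν,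
      if_pos (Finset.mem_univ ν)]
  rw [Finset.sum_congr rfl (fun ν _ => expand ν)]
  rw [Finset.sum_add_distrib, Finset.sum_add_distrib]
  -- third piece vanishes by antisymmetry + symmetry of second derivatives
  have inner : ∀ ξ : Fin d, (∑ ν, ∑ σ, x ξ * C ν σ ξ * g x * pd ν (pd σ f) x) = 0 := by
    intro ξ
    have h2 : (∑ ν, ∑ σ, x ξ * C ν σ ξ * g x * pd ν (pd σ f) x)
        = ∑ ν, ∑ σ, -(x ξ * C σ ν ξ * g x * pd σ (pd ν f) x) :=
      Finset.sum_congr rfl fun ν _ => Finset.sum_congr rfl fun σ _ => by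
        rw [hC ν σ ξ, pd_pd_symm hf]; ring
    have h4 : (∑ ν, ∑ σ, x ξ * C ν σ ξ * g x * pd ν (pd σ f) x)
        = -(∑ ν, ∑ σ, x ξ * C ν σ ξ * g x * pd ν (pd σ f) x) :=
      calc (∑ ν, ∑ σ, x ξ * C ν σ ξ * g x * pd ν (pd σ f) x)
          = ∑ ν, ∑ σ, -(x ξ * C σ ν ξ * g x * pd σ (pd ν f) x) := h2
        _ = ∑ σ, ∑ ν, -(x ξ * C σ ν ξ * g x * pd σ (pd ν f) x) := Finset.sum_comm
        _ = -(∑ ν, ∑ σ, x ξ * C ν σ ξ * g x * pd ν (pd σ f) x) := by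
            simp [Finset.sum_neg_distrib]
    linarith
  have third : (∑ ν, ∑ ξ, ∑ σ, x ξ * C ν σ ξ * g x * pd ν (pd σ f) x) = 0 := by
    rw [Finset.sum_comm]
    exact Finset.sum_eq_zero fun ξ _ => inner ξ
  rw [third, add_zero]
  -- match remaining pieces
  have first : (∑ ν, ∑ σ, C ν σ ν * g x * pd σ f x)
      = g x * (∑ ν, ∑ σ, C ν σ ν * pd σ f x) := by
    rw [Finset.mul_sum]
    refine Finset.sum_congr rfl fun ν _ => ?_
    rw [Finset.mul_sum]
    exact Finset.sum_congr rfl fun σ _ => by ring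
  have second : (∑ ν, ∑ ξ, ∑ σ, x ξ * C ν σ ξ * pd ν g x * pd σ f x)
      = ∑ lam, ∑ μ, ∑ ν, x lam * C μ ν lam * pd μ g x * pd ν f x := by
    rw [Finset.sum_comm]
  rw [first, second]
  ring
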